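/- Let K = {x ∈ ℝ³ : |x₁| ≤ 10, |x₂| ≤ 10, |x₃| ≤ 10, and |x₁| + |x₂| + |x₃| ≤ 15} and let L = {(20k, 20l, 20m) : k, l, m ∈ ℤ} ∪ {(20k+10, 20l+10, 20m+10) : k, l, m ∈ ℤ}. Then for every p ∈ ℝ³ and every r with 0 ≤ r < (5/2)·√2, the number of vectors v ∈ L such that (v + K) intersects closedBall(p, r) is at most four. -/

import Mathlib

open Metric Set

/-- The truncated octahedron: the intersection of the cube `[−10,10]³` with the
octahedron `{x : |x₁|+|x₂|+|x₃| ≤ 15}`. -/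
def truncOcta : Set (EuclideanSpace ℝ (Fin 3)) :=
  {x | |x 0| ≤ 10 ∧ |x 1| ≤ 10 ∧ |x 2| ≤ 10 ∧ |x 0| + |x 1| + |x 2| ≤ 15}

/-- The lattice of translation vectors `(20k, 20l, 20m)` and `(20k+10, 20l+10, 20m+10)`
for `k, l, m ∈ ℤ`. -/
def bccLattice : Set (EuclideanSpace ℝ (Fin 3)) :=
  {v | ∃ k l m : ℤ, (v 0 = 20 * k ∧ v 1 = 20 * l ∧ v 2 = 20 * m) ∨
       (v 0 = 20 * k + 10 ∧ v 1 = 20 * l + 10 ∧ v 2 = 20 * m + 10)}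

/-- a set with no three pairwise distinct elements has at most two elements -/
lemma aux_encard_le_two {α : Type*} {s : Set α}
    (h : ∀ a ∈ s, ∀ b ∈ s, ∀ c ∈ s, a = b ∨ a = c ∨ b = c) : s.encard ≤ 2 := by
  rcases s.eq_empty_or_nonempty with rfl | ⟨a, ha⟩
  · simp
  have h1 : (s \ {a}).encard ≤ 1 := by
    rw [Set.encard_le_one_iff]
    intro b c hb hc
    rcases h a ha b hb.1 c hc.1 with h' | h' | h'
    · exact absurd h'.symm hb.2
    · exact absurd h'.symm hc.2
    · exact h'
  have hsub : s ⊆ insert a (s \ {a}) := by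
    intro x hx
    by_cases hxa : x = a
    · simp [hxa]
    · exact Set.mem_insert_of_mem _ ⟨hx, hxa⟩
  calc s.encard ≤ (insert a (s \ {a})).encard := Set.encard_mono hsub
    _ ≤ (s \ {a}).encard + 1 := Set.encard_insert_le _ _
    _ ≤ 1 + 1 := by exact add_le_add_left h1 1
    _ = 2 := by norm_num

lemma aux_int_small {x : ℤ} (h : |20 * (x : ℝ)| < 40) : -2 < x ∧ x < 2 := by
  rw [abs_lt] at h
  constructor
  · exact_mod_cast show (-2 : ℝ) < x by linarith
  · exact_mod_cast show (x : ℝ) < 2 by linarith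

lemma aux_int_pair {x y : ℤ} (h : |20 * (x : ℝ)| + |20 * (y : ℝ)| < 40) :
    x = 0 ∨ y = 0 := by
  by_contra hc
  push_neg at hc
  have hx : (1 : ℝ) ≤ |(x : ℝ)| := by
    have := Int.one_le_abs (by exact_mod_cast hc.1 : x ≠ 0)
    exact_mod_cast this
  have hy : (1 : ℝ) ≤ |(y : ℝ)| := by
    have := Int.one_le_abs (by exact_mod_cast hc.2 : y ≠ 0)
    exact_mod_cast this
  rw [abs_mul, abs_mul] at h
  norm_num at h
  linarith

/-- the "even" class of the lattice -/
def evenClass (v : EuclideanSpace ℝ (Fin 3)) : Prop :=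
  ∃ k l m : ℤ, v 0 = 20 * k ∧ v 1 = 20 * l ∧ v 2 = 20 * m

/-- the "odd" class of the lattice -/
def oddClass (v : EuclideanSpace ℝ (Fin 3)) : Prop :=
  ∃ k l m : ℤ, v 0 = 20 * k + 10 ∧ v 1 = 20 * l + 10 ∧ v 2 = 20 * m + 10

lemma aux_class (v : EuclideanSpace ℝ (Fin 3)) (hv : v ∈ bccLattice) :
    evenClass v ∨ oddClass v := by
  obtain ⟨k, l, m, h | h⟩ := hv
  · exact Or.inl ⟨k, l, m, h⟩
  · exact Or.inr ⟨k, l, m, h⟩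

set_option maxHeartbeats 1000000 in
/-- key coordinate facts for a tile meeting the ball -/
lemma aux_coordFacts (p : EuclideanSpace ℝ (Fin 3)) (r : ℝ) (hr0 : 0 ≤ r)
    (v : EuclideanSpace ℝ (Fin 3))
    (hv : ((fun x => v + x) '' truncOcta ∩ closedBall p r).Nonempty) :
    (|p 0 - v 0| ≤ 10 + r) ∧ (|p 1 - v 1| ≤ 10 + r) ∧ (|p 2 - v 2| ≤ 10 + r) ∧
    (|p 0 - v 0| + |p 1 - v 1| ≤ 15 + Real.sqrt 2 * r) ∧
    (|p 0 - v 0| + |p 2 - v 2| ≤ 15 + Real.sqrt 2 * r) ∧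
    (|p 1 - v 1| + |p 2 - v 2| ≤ 15 + Real.sqrt 2 * r) := by
  obtain ⟨y, ⟨x, hx, rfl⟩, hy⟩ := hv
  obtain ⟨hx0, hx1, hx2, hx3⟩ := hx
  rw [mem_closedBall, EuclideanSpace.dist_eq] at hy
  have hsum : ∑ i, dist ((v + x) i) (p i) ^ 2 ≤ r ^ 2 := by
    have h0 : (0:ℝ) ≤ ∑ i, dist ((v + x) i) (p i) ^ 2 :=
      Finset.sum_nonneg fun i _ => sq_nonneg _
    nlinarith [Real.sq_sqrt h0, Real.sqrt_nonneg (∑ i, dist ((v + x) i) (p i) ^ 2)]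
  rw [Fin.sum_univ_three] at hsum
  simp only [PiLp.add_apply, Real.dist_eq, sq_abs] at hsum
  set d0 := v 0 + x 0 - p 0 with hd0def
  set d1 := v 1 + x 1 - p 1 with hd1def
  set d2 := v 2 + x 2 - p 2 with hd2def
  have key1 : ∀ a b : ℝ, a ^ 2 ≤ r ^ 2 → |a| ≤ r := by
    intro a b h
    rw [abs_le]
    constructor <;> nlinarith
  have hb0 : |d0| ≤ r := key1 d0 0 (by nlinarith [sq_nonneg d1, sq_nonneg d2])
  have hb1 : |d1| ≤ r := key1 d1 0 (by nlinarith [sq_nonneg d0, sq_nonneg d2])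
  have hb2 : |d2| ≤ r := key1 d2 0 (by nlinarith [sq_nonneg d0, sq_nonneg d1])
  have key2 : ∀ a b : ℝ, a ^ 2 + b ^ 2 ≤ r ^ 2 → |a| + |b| ≤ Real.sqrt 2 * r := by
    intro a b h
    nlinarith [sq_nonneg (|a| - |b|), sq_abs a, sq_abs b, abs_nonneg a, abs_nonneg b,
      Real.sq_sqrt (show (0:ℝ) ≤ 2 by norm_num), Real.sqrt_nonneg 2,
      mul_nonneg (Real.sqrt_nonneg 2) hr0,
      sq_nonneg (|a| + |b| + Real.sqrt 2 * r), sq_nonneg (|a| + |b| - Real.sqrt 2 * r)]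
  have hp01 : |d0| + |d1| ≤ Real.sqrt 2 * r := key2 d0 d1 (by nlinarith [sq_nonneg d2])
  have hp02 : |d0| + |d2| ≤ Real.sqrt 2 * r := key2 d0 d2 (by nlinarith [sq_nonneg d1])
  have hp12 : |d1| + |d2| ≤ Real.sqrt 2 * r := key2 d1 d2 (by nlinarith [sq_nonneg d0])
  have e0 : p 0 - v 0 = x 0 - d0 := by rw [hd0def]; ring
  have e1 : p 1 - v 1 = x 1 - d1 := by rw [hd1def]; ring
  have e2 : p 2 - v 2 = x 2 - d2 := by rw [hd2def]; ring
  have t0 : |p 0 - v 0| ≤ |x 0| + |d0| := by rw [e0]; exact abs_sub _ _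
  have t1 : |p 1 - v 1| ≤ |x 1| + |d1| := by rw [e1]; exact abs_sub _ _
  have t2 : |p 2 - v 2| ≤ |x 2| + |d2| := by rw [e2]; exact abs_sub _ _
  have a0 : 0 ≤ |x 0| := abs_nonneg _
  have a1 : 0 ≤ |x 1| := abs_nonneg _
  have a2 : 0 ≤ |x 2| := abs_nonneg _
  refine ⟨by linarith, by linarith, by linarith, by linarith, by linarith, by linarith⟩

set_option maxHeartbeats 2000000 in
/-- Every closed ball of radius `r < (5/2)·√2` intersects at most four tiles of the
truncated-octahedron tiling. -/
theorem truncOcta_tiling_ball_meets_at_most_four_tiles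
    (p : EuclideanSpace ℝ (Fin 3)) (r : ℝ) (hr0 : 0 ≤ r)
    (hr : r < 5 / 2 * Real.sqrt 2) :
    {v ∈ bccLattice | ((fun x => v + x) '' truncOcta ∩ closedBall p r).Nonempty}.encard
      ≤ 4 := by
  set S := {v ∈ bccLattice | ((fun x => v + x) '' truncOcta ∩ closedBall p r).Nonempty}
    with hS
  -- numeric facts
  have hs2 : Real.sqrt 2 < 1.5 := by
    nlinarith [Real.sq_sqrt (show (0:ℝ) ≤ 2 by norm_num), Real.sqrt_nonneg 2]
  have hs2r : Real.sqrt 2 * r < 5 := by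
    nlinarith [Real.sq_sqrt (show (0:ℝ) ≤ 2 by norm_num), Real.sqrt_nonneg 2]
  have hrlt : r < 4 := by nlinarith
  -- pairwise difference bounds for two qualifying tiles
  have diffB : ∀ u ∈ S, ∀ w ∈ S,
      (|u 0 - w 0| < 40) ∧ (|u 1 - w 1| < 40) ∧ (|u 2 - w 2| < 40) ∧
      (|u 0 - w 0| + |u 1 - w 1| < 40) ∧ (|u 0 - w 0| + |u 2 - w 2| < 40) ∧
      (|u 1 - w 1| + |u 2 - w 2| < 40) := by
    intro u hu w hw
    obtain ⟨u0, u1, u2, u01, u02, u12⟩ := aux_coordFacts p r hr0 u hu.2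
    obtain ⟨w0, w1, w2, w01, w02, w12⟩ := aux_coordFacts p r hr0 w hw.2
    have s0 : |u 0 - w 0| ≤ |p 0 - u 0| + |p 0 - w 0| := by
      have : u 0 - w 0 = (p 0 - w 0) - (p 0 - u 0) := by ring
      rw [this]; exact (abs_sub _ _).trans (by rw [add_comm])
    have s1 : |u 1 - w 1| ≤ |p 1 - u 1| + |p 1 - w 1| := by
      have : u 1 - w 1 = (p 1 - w 1) - (p 1 - u 1) := by ring
      rw [this]; exact (abs_sub _ _).trans (by rw [add_comm])
    have s2 : |u 2 - w 2| ≤ |p 2 - u 2| + |p 2 - w 2| := by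
      have : u 2 - w 2 = (p 2 - w 2) - (p 2 - u 2) := by ring
      rw [this]; exact (abs_sub _ _).trans (by rw [add_comm])
    refine ⟨by linarith, by linarith, by linarith, by linarith, by linarith, by linarith⟩
  -- same-class integer differences
  have intdiff : ∀ u w : EuclideanSpace ℝ (Fin 3),
      (evenClass u ∧ evenClass w) ∨ (oddClass u ∧ oddClass w) →
      ∃ n0 n1 n2 : ℤ, u 0 - w 0 = 20 * n0 ∧ u 1 - w 1 = 20 * n1 ∧ u 2 - w 2 = 20 * n2 := by
    rintro u w (⟨⟨k, l, m, h0, h1, h2⟩, ⟨k', l', m', h0', h1', h2'⟩⟩ |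
      ⟨⟨k, l, m, h0, h1, h2⟩, ⟨k', l', m', h0', h1', h2'⟩⟩) <;>
      exact ⟨k - k', l - l', m - m', by push_cast; rw [h0, h0']; ring,
        by push_cast; rw [h1, h1']; ring, by push_cast; rw [h2, h2']; ring⟩
  -- no three distinct same-class qualifying tiles
  have noThree : ∀ a ∈ S, ∀ b ∈ S, ∀ c ∈ S,
      ((evenClass a ∧ evenClass b ∧ evenClass c) ∨ (oddClass a ∧ oddClass b ∧ oddClass c)) →
      a = b ∨ a = c ∨ b = c := by
    intro a ha b hb c hc hcl
    by_contra hcon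
    push_neg at hcon
    obtain ⟨hab, hac, hbc⟩ := hcon
    obtain ⟨n0, n1, n2, hn0, hn1, hn2⟩ := intdiff a b (by tauto)
    obtain ⟨m0, m1, m2, hm0, hm1, hm2⟩ := intdiff a c (by tauto)
    obtain ⟨q0, q1, q2, hq0, hq1, hq2⟩ := intdiff b c (by tauto)
    have hqn0 : q0 = m0 - n0 := by
      have : (20:ℝ) * q0 = 20 * (m0 - n0) := by push_cast; linarith [hn0, hm0, hq0]
      exact_mod_cast (by linarith : (q0:ℝ) = m0 - n0)
    have hqn1 : q1 = m1 - n1 := by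
      have : (20:ℝ) * q1 = 20 * (m1 - n1) := by push_cast; linarith [hn1, hm1, hq1]
      exact_mod_cast (by linarith : (q1:ℝ) = m1 - n1)
    have hqn2 : q2 = m2 - n2 := by
      have : (20:ℝ) * q2 = 20 * (m2 - n2) := by push_cast; linarith [hn2, hm2, hq2]
      exact_mod_cast (by linarith : (q2:ℝ) = m2 - n2)
    obtain ⟨ab0, ab1, ab2, ab01, ab02, ab12⟩ := diffB a ha b hb
    obtain ⟨ac0, ac1, ac2, ac01, ac02, ac12⟩ := diffB a ha c hc
    obtain ⟨bc0, bc1, bc2, bc01, bc02, bc12⟩ := diffB b hb c hc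
    rw [hn0] at ab0 ab01 ab02; rw [hn1] at ab1 ab01 ab12; rw [hn2] at ab2 ab02 ab12
    rw [hm0] at ac0 ac01 ac02; rw [hm1] at ac1 ac01 ac12; rw [hm2] at ac2 ac02 ac12
    rw [hq0] at bc0 bc01 bc02; rw [hq1] at bc1 bc01 bc12; rw [hq2] at bc2 bc02 bc12
    have N0 := aux_int_small ab0; have N1 := aux_int_small ab1; have N2 := aux_int_small ab2
    have M0 := aux_int_small ac0; have M1 := aux_int_small ac1; have M2 := aux_int_small ac2
    have Q0 := aux_int_small bc0; have Q1 := aux_int_small bc1; have Q2 := aux_int_small bc2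
    have P1 := aux_int_pair ab01; have P2 := aux_int_pair ab02; have P3 := aux_int_pair ab12
    have P4 := aux_int_pair ac01; have P5 := aux_int_pair ac02; have P6 := aux_int_pair ac12
    have P7 := aux_int_pair bc01; have P8 := aux_int_pair bc02; have P9 := aux_int_pair bc12
    have hNne : ¬(n0 = 0 ∧ n1 = 0 ∧ n2 = 0) := by
      rintro ⟨e0, e1, e2⟩
      apply hab
      ext i
      fin_cases i
      · have : (n0:ℝ) = 0 := by exact_mod_cast e0
        simpa [this] using (by linarith [hn0, this] : a 0 = b 0)
      · have : (n1:ℝ) = 0 := by exact_mod_cast e1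
        simpa [this] using (by linarith [hn1, this] : a 1 = b 1)
      · have : (n2:ℝ) = 0 := by exact_mod_cast e2
        simpa [this] using (by linarith [hn2, this] : a 2 = b 2)
    have hMne : ¬(m0 = 0 ∧ m1 = 0 ∧ m2 = 0) := by
      rintro ⟨e0, e1, e2⟩
      apply hac
      ext i
      fin_cases i
      · have : (m0:ℝ) = 0 := by exact_mod_cast e0
        simpa [this] using (by linarith [hm0, this] : a 0 = c 0)
      · have : (m1:ℝ) = 0 := by exact_mod_cast e1
        simpa [this] using (by linarith [hm1, this] : a 1 = c 1)
      · have : (m2:ℝ) = 0 := by exact_mod_cast e2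
        simpa [this] using (by linarith [hm2, this] : a 2 = c 2)
    have hQne : ¬(q0 = 0 ∧ q1 = 0 ∧ q2 = 0) := by
      rintro ⟨e0, e1, e2⟩
      apply hbc
      ext i
      fin_cases i
      · have : (q0:ℝ) = 0 := by exact_mod_cast e0
        simpa [this] using (by linarith [hq0, this] : b 0 = c 0)
      · have : (q1:ℝ) = 0 := by exact_mod_cast e1
        simpa [this] using (by linarith [hq1, this] : b 1 = c 1)
      · have : (q2:ℝ) = 0 := by exact_mod_cast e2
        simpa [this] using (by linarith [hq2, this] : b 2 = c 2)
    omega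
  -- split into the two classes
  have hsub : S ⊆ {v ∈ S | evenClass v} ∪ {v ∈ S | oddClass v} := by
    intro v hv
    rcases aux_class v hv.1 with h | h
    · exact Or.inl ⟨hv, h⟩
    · exact Or.inr ⟨hv, h⟩
  have hE : {v ∈ S | evenClass v}.encard ≤ 2 := by
    apply aux_encard_le_two
    intro a ha b hb c hc
    exact noThree a ha.1 b hb.1 c hc.1 (Or.inl ⟨ha.2, hb.2, hc.2⟩)
  have hO : {v ∈ S | oddClass v}.encard ≤ 2 := by
    apply aux_encard_le_two
    intro a ha b hb c hc
    exact noThree a ha.1 b hb.1 c hc.1 (Or.inr ⟨ha.2, hb.2, hc.2⟩)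
  calc S.encard ≤ ({v ∈ S | evenClass v} ∪ {v ∈ S | oddClass v}).encard :=
        Set.encard_mono hsub
    _ ≤ {v ∈ S | evenClass v}.encard + {v ∈ S | oddClass v}.encard :=
        Set.encard_union_le _ _
    _ ≤ 2 + 2 := add_le_add hE hO
    _ = 4 := by norm_num
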